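/- For every integer m ≥ 0, one has 4 · a′₆(3m+1) = (−1)^{m+1} · r(3m+1), where a′₆(n) = ∑_{x,y ∈ ℕ, x²+y²=n} a(x)·b(y). -/

import Mathlib

/-- `a 0 = 1` and `a n = 2·(−1)^n` for `n > 0`. -/
def a (n : ℕ) : ℤ := if n = 0 then 1 else 2 * (-1) ^ n

/-- `b 0 = 1`, `b (3m) = 2·(−1)^m` for `m > 0`, and `b n = (−1)^{n−1}` if `3 ∤ n`. -/
def b (n : ℕ) : ℤ :=
  if n = 0 then 1 else if n % 3 = 0 then 2 * (-1) ^ (n / 3) else (-1) ^ (n - 1)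

/-- `a′₆ n = ∑ a x · b y`, the sum over all pairs `(x, y)` of non-negative integers
with `x² + y² = n`. -/
def a'6 (n : ℕ) : ℤ :=
  ∑ p ∈ (Finset.range (n + 1) ×ˢ Finset.range (n + 1)).filter
      (fun p => p.1 ^ 2 + p.2 ^ 2 = n), a p.1 * b p.2

/-- `r n` is the number of representations of `n` as a sum of two squares of integers. -/
noncomputable def r (n : ℕ) : ℕ := Set.ncard {p : ℤ × ℤ | p.1 ^ 2 + p.2 ^ 2 = (n : ℤ)}

/-! ### Auxiliary development -/

/-- The finite set of integer lattice points on the circle `x² + y² = n`. -/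
noncomputable def T (n : ℕ) : Finset (ℤ × ℤ) :=
  ((Finset.Icc (-(n:ℤ)) n) ×ˢ (Finset.Icc (-(n:ℤ)) n)).filter fun p => p.1^2 + p.2^2 = (n:ℤ)

lemma mem_T {n : ℕ} {p : ℤ × ℤ} : p ∈ T n ↔ p.1^2 + p.2^2 = (n:ℤ) := by
  simp only [T, Finset.mem_filter, Finset.mem_product, Finset.mem_Icc, and_iff_right_iff_imp]
  intro h
  constructor <;> constructor <;> nlinarith [sq_nonneg p.1, sq_nonneg p.2, sq_nonneg ((n:ℤ) - 1)]

lemma r_eq (n : ℕ) : r n = (T n).card := by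
  have h : {p : ℤ × ℤ | p.1 ^ 2 + p.2 ^ 2 = (n : ℤ)} = ↑(T n) := by
    ext p; simp [mem_T]
  rw [r, h, Set.ncard_coe_finset]

/-- Symmetrized weight in the first variable. -/
def al (u : ℤ) : ℤ := if u = 0 then 2 else 2 * (-1)^u.natAbs

/-- Symmetrized weight in the second variable. -/
def be (v : ℤ) : ℤ := if v = 0 then 2 else b v.natAbs

/-- Product weight on lattice points. -/
def w (p : ℤ × ℤ) : ℤ := al p.1 * be p.2

lemma sum_pair_al (x : ℕ) : ∑ u ∈ ({(x:ℤ), -(x:ℤ)} : Finset ℤ), al u = 2 * a x := by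
  rcases Nat.eq_zero_or_pos x with h|h
  · subst h; simp [al, a]
  · have hne : (x:ℤ) ≠ -(x:ℤ) := by omega
    rw [Finset.sum_pair hne]
    have hx : (x:ℤ) ≠ 0 := by exact_mod_cast h.ne'
    simp only [al, hx, if_false, neg_eq_zero, Int.natAbs_neg, Int.natAbs_natCast, a, h.ne', ite_false]
    ring

lemma sum_pair_be (y : ℕ) : ∑ v ∈ ({(y:ℤ), -(y:ℤ)} : Finset ℤ), be v = 2 * b y := by
  rcases Nat.eq_zero_or_pos y with h|h
  · subst h; simp [be, b]
  · have hne : (y:ℤ) ≠ -(y:ℤ) := by omega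
    rw [Finset.sum_pair hne]
    have hy : (y:ℤ) ≠ 0 := by exact_mod_cast h.ne'
    simp only [be, hy, if_false, neg_eq_zero, Int.natAbs_neg, Int.natAbs_natCast]
    ring

lemma fiber_eq {n : ℕ} {x y : ℕ} (hq : x^2 + y^2 = n) :
    (T n).filter (fun p => (p.1.natAbs, p.2.natAbs) = (x, y))
      = ({(x:ℤ), -(x:ℤ)} : Finset ℤ) ×ˢ ({(y:ℤ), -(y:ℤ)} : Finset ℤ) := by
  ext p
  simp only [Finset.mem_filter, mem_T, Finset.mem_product, Finset.mem_insert,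
    Finset.mem_singleton, Prod.mk.injEq]
  constructor
  · rintro ⟨-, h1, h2⟩
    rw [Int.natAbs_eq_iff] at h1 h2
    exact ⟨by exact_mod_cast h1, by exact_mod_cast h2⟩
  · rintro ⟨h1, h2⟩
    have e1 : p.1^2 = (x:ℤ)^2 := by rcases h1 with h|h <;> rw [h] <;> ring
    have e2 : p.2^2 = (y:ℤ)^2 := by rcases h2 with h|h <;> rw [h] <;> ring
    refine ⟨by rw [e1, e2]; exact_mod_cast hq, ?_, ?_⟩
    · rcases h1 with h|h <;> simp [h]
    · rcases h2 with h|h <;> simp [h]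

lemma sum_w (n : ℕ) : ∑ p ∈ T n, w p = 4 * a'6 n := by
  have hmaps : ∀ p ∈ T n, (fun p : ℤ×ℤ => (p.1.natAbs, p.2.natAbs)) p ∈
      (Finset.range (n + 1) ×ˢ Finset.range (n + 1)).filter
        (fun p => p.1 ^ 2 + p.2 ^ 2 = n) := by
    intro p hp
    have h := mem_T.mp hp
    have key : p.1.natAbs^2 + p.2.natAbs^2 = n := by
      have h2 : ((p.1.natAbs:ℤ))^2 + ((p.2.natAbs:ℤ))^2 = (n:ℤ) := by
        rw [← Int.abs_eq_natAbs, ← Int.abs_eq_natAbs, sq_abs, sq_abs]; exact h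
      exact_mod_cast h2
    simp only [Finset.mem_filter, Finset.mem_product, Finset.mem_range]
    refine ⟨⟨?_, ?_⟩, key⟩ <;> nlinarith [key, Nat.zero_le (p.1.natAbs), Nat.zero_le (p.2.natAbs)]
  rw [a'6, Finset.mul_sum, ← Finset.sum_fiberwise_of_maps_to hmaps w]
  apply Finset.sum_congr rfl
  intro q hq
  simp only [Finset.mem_filter, Finset.mem_product, Finset.mem_range] at hq
  obtain ⟨⟨-, -⟩, heq⟩ := hq
  have hfib := fiber_eq (x := q.1) (y := q.2) (n := n) heq
  rw [show ((q.1, q.2) : ℕ × ℕ) = q from rfl] at hfib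
  rw [hfib]
  rw [Finset.sum_product]
  have step : ∀ u ∈ ({(q.1:ℤ), -(q.1:ℤ)} : Finset ℤ),
      (∑ v ∈ ({(q.2:ℤ), -(q.2:ℤ)} : Finset ℤ), w (u, v)) = al u * (2 * b q.2) := by
    intro u _
    rw [show (∑ v ∈ ({(q.2:ℤ), -(q.2:ℤ)} : Finset ℤ), w (u, v))
        = al u * ∑ v ∈ ({(q.2:ℤ), -(q.2:ℤ)} : Finset ℤ), be v by rw [Finset.mul_sum]; rfl,
      sum_pair_be]
  rw [Finset.sum_congr rfl step, ← Finset.sum_mul, sum_pair_al]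
  ring

lemma pow_neg_one_eq {s t : ℕ} (h : s % 2 = t % 2) : ((-1:ℤ))^s = (-1)^t := by
  rcases Nat.even_or_odd s with hs|hs
  · have ht : Even t := by rw [Nat.even_iff] at *; omega
    rw [hs.neg_one_pow, ht.neg_one_pow]
  · have ht : Odd t := by rw [Nat.odd_iff] at *; omega
    rw [hs.neg_one_pow, ht.neg_one_pow]

lemma parity_key {u v : ℤ} {m : ℕ} (h : u^2 + v^2 = 3*(m:ℤ)+1) :
    (u.natAbs + v.natAbs) % 2 = (m+1) % 2 := by
  have h2 : Even (u^2 + v^2) ↔ Even (3*(m:ℤ)+1) := by rw [h]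
  simp only [Int.even_add, Int.even_pow, Int.even_mul] at h2
  simp only [Int.even_iff, Nat.even_iff] at h2
  omega

lemma mod3_key {u v : ℤ} {m : ℕ} (h : u^2 + v^2 = 3*(m:ℤ)+1) :
    ((3:ℤ) ∣ u ↔ ¬ (3:ℤ) ∣ v) := by
  have key : ∀ x y : ZMod 3, x^2 + y^2 = 1 → (x = 0 ↔ ¬ y = 0) := by decide
  have hc : ((u:ZMod 3))^2 + ((v:ZMod 3))^2 = 1 := by
    have := congrArg (fun z : ℤ => (z : ZMod 3)) h
    push_cast at this
    simpa [show ((3:ZMod 3)) = 0 by decide] using this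
  have h3 := key _ _ hc
  rw [show (3:ℤ) = ((3:ℕ):ℤ) from rfl, ← ZMod.intCast_zmod_eq_zero_iff_dvd,
    ← ZMod.intCast_zmod_eq_zero_iff_dvd]
  exact h3

lemma w_val_dvd {u v : ℤ} {m : ℕ} (h : u^2 + v^2 = 3*(m:ℤ)+1) (hv : (3:ℤ) ∣ v) :
    w (u, v) = 4 * (-1)^(m+1) := by
  obtain ⟨k, rfl⟩ := hv
  have hu3 : ¬ (3:ℤ) ∣ u := by
    have := mod3_key h
    tauto
  have hu : u ≠ 0 := by rintro rfl; exact hu3 ⟨0, by ring⟩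
  have hbe : be (3*k) = 2 * (-1)^(k.natAbs) := by
    rcases eq_or_ne k 0 with rfl|hk
    · simp [be]
    · have h1 : (3*k) ≠ 0 := by simpa using hk
      have h2 : (3*k).natAbs = 3 * k.natAbs := by
        rw [Int.natAbs_mul]; rfl
      simp only [be, h1, if_false, h2, b]
      have h3 : 3 * k.natAbs ≠ 0 := by simpa using (fun hh => hk (Int.natAbs_eq_zero.mp hh))
      rw [if_neg h3, if_pos (by omega), Nat.mul_div_cancel_left _ (by norm_num)]
  have hpar : (u.natAbs + (3*k).natAbs) % 2 = (m+1) % 2 := parity_key h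
  have hpar2 : (u.natAbs + k.natAbs) % 2 = (m+1) % 2 := by
    have h2 : (3*k).natAbs = 3 * k.natAbs := by rw [Int.natAbs_mul]; rfl
    rw [h2] at hpar; omega
  show al u * be (3*k) = 4 * (-1)^(m+1)
  rw [hbe, al, if_neg hu]
  rw [show (2 * (-1:ℤ)^u.natAbs) * (2 * (-1)^k.natAbs) = 4 * (-1)^(u.natAbs + k.natAbs) by
    rw [pow_add]; ring]
  rw [pow_neg_one_eq hpar2]

lemma w_val_not_dvd {u v : ℤ} {m : ℕ} (h : u^2 + v^2 = 3*(m:ℤ)+1) (hv : ¬ (3:ℤ) ∣ v) :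
    w (u, v) = 2 * (-1)^m := by
  have hv0 : v ≠ 0 := by rintro rfl; exact hv ⟨0, by ring⟩
  have hv0' : v.natAbs ≠ 0 := fun hh => hv0 (Int.natAbs_eq_zero.mp hh)
  have hv3 : v.natAbs % 3 ≠ 0 := by
    intro hh
    exact hv (by omega)
  have hbe : be v = (-1)^(v.natAbs - 1) := by
    simp only [be, hv0, if_false, b, hv0', ite_false, hv3]
  have hpar : (u.natAbs + v.natAbs) % 2 = (m+1) % 2 := parity_key h
  have key : al u = 2 * (-1)^(u.natAbs) := by
    rcases eq_or_ne u 0 with rfl|hu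
    · simp [al]
    · rw [al, if_neg hu]
  show al u * be v = 2 * (-1)^m
  rw [key, hbe, show (2 * (-1:ℤ)^u.natAbs) * (-1)^(v.natAbs - 1)
      = 2 * (-1)^(u.natAbs + (v.natAbs - 1)) by rw [pow_add]; ring]
  congr 1
  exact pow_neg_one_eq (by omega)

lemma hT_eq {m : ℕ} {p : ℤ × ℤ} (hp : p ∈ T (3*m+1)) :
    p.1^2 + p.2^2 = 3*(m:ℤ)+1 := by
  have := mem_T.mp hp
  push_cast at this
  linarith

lemma card_swap (m : ℕ) :
    ((T (3*m+1)).filter (fun p => (3:ℤ) ∣ p.2)).card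
      = ((T (3*m+1)).filter (fun p => ¬ (3:ℤ) ∣ p.2)).card := by
  apply Finset.card_bij (fun p _ => p.swap)
  · intro p hp
    simp only [Finset.mem_filter] at hp ⊢
    obtain ⟨hpT, hdv⟩ := hp
    have h := hT_eq hpT
    have hnd : ¬ (3:ℤ) ∣ p.1 := by
      have := mod3_key h
      tauto
    refine ⟨mem_T.mpr ?_, hnd⟩
    have := mem_T.mp hpT
    simpa [Prod.swap, add_comm] using this
  · intro p _ q _ hpq
    exact Prod.swap_injective hpq
  · intro q hq
    simp only [Finset.mem_filter] at hq
    obtain ⟨hqT, hdv⟩ := hq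
    have h := hT_eq hqT
    have hd1 : (3:ℤ) ∣ q.1 := by
      have := mod3_key h
      tauto
    refine ⟨q.swap, ?_, by simp⟩
    simp only [Finset.mem_filter]
    refine ⟨mem_T.mpr ?_, by simpa [Prod.swap] using hd1⟩
    have := mem_T.mp hqT
    simpa [Prod.swap, add_comm] using this

theorem a'6_three_mul_add_one (m : ℕ) :
    4 * a'6 (3 * m + 1) = (-1) ^ (m + 1) * (r (3 * m + 1) : ℤ) := by
  classical
  set n := 3*m+1 with hn
  rw [← sum_w]
  rw [← Finset.sum_filter_add_sum_filter_not (T n) (fun p => (3:ℤ) ∣ p.2) w]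
  set P := (T n).filter (fun p => (3:ℤ) ∣ p.2) with hP
  set Q := (T n).filter (fun p => ¬ (3:ℤ) ∣ p.2) with hQ
  have h1 : ∑ p ∈ P, w p = P.card * (4 * (-1)^(m+1)) := by
    have hval : ∀ p ∈ P, w p = 4 * (-1)^(m+1) := by
      intro p hp
      rw [hP, Finset.mem_filter] at hp
      exact w_val_dvd (hT_eq hp.1) hp.2
    rw [Finset.sum_congr rfl hval, Finset.sum_const, nsmul_eq_mul]
  have h2 : ∑ p ∈ Q, w p = Q.card * (2 * (-1)^m) := by
    have hval : ∀ p ∈ Q, w p = 2 * (-1)^m := by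
      intro p hp
      rw [hQ, Finset.mem_filter] at hp
      exact w_val_not_dvd (hT_eq hp.1) hp.2
    rw [Finset.sum_congr rfl hval, Finset.sum_const, nsmul_eq_mul]
  have hcard : P.card + Q.card = (T n).card :=
    Finset.card_filter_add_card_filter_not _
  have hswap : P.card = Q.card := card_swap m
  have hr : ((r n : ℤ)) = (P.card : ℤ) + Q.card := by
    rw [r_eq]
    exact_mod_cast hcard.symm
  rw [h1, h2, hr, pow_succ, ← hswap]
  push_cast
  ring
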